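/- Let Ω ⊂ ℝ be a compact set, T > 0, and Q_T = (0,T) × Ω equipped with Lebesgue measure. Let (u_n) be a sequence of essentially bounded measurable functions on Q_T and (f_n) a sequence of continuous functions on ℝ such that: (i) u_n → u weakly in L²(Q_T); (ii) each f_n is nondecreasing; (iii) f_n → f uniformly on compact subsets of ℝ; (iv) f_n ∘ u_n → χ strongly in L²(Q_T). Then χ = f(u) almost everywhere in Q_T. -/

import Mathlib

open MeasureTheory Filter


/-- Cauchy–Schwarz for real integrals. -/
lemma my_cs {α : Type*} [MeasurableSpace α] {μ : Measure α} {a b : α → ℝ}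
    (ha : MemLp a 2 μ) (hb : MemLp b 2 μ) :
    |∫ x, a x * b x ∂μ| ≤ Real.sqrt (∫ x, a x ^ 2 ∂μ) * Real.sqrt (∫ x, b x ^ 2 ∂μ) := by
  set A := ha.toLp a with hA
  set B := hb.toLp b with hB
  have hinner : @inner ℝ _ _ A B = ∫ x, a x * b x ∂μ := by
    rw [L2.inner_def]
    refine integral_congr_ae ?_
    filter_upwards [ha.coeFn_toLp, hb.coeFn_toLp] with x hx hy
    simp [hA, hB, hx, hy, RCLike.inner_apply, mul_comm]
  have hAA : ∫ x, a x ^ 2 ∂μ = ‖A‖ ^ 2 := by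
    rw [← real_inner_self_eq_norm_sq, L2.inner_def]
    refine integral_congr_ae ?_
    filter_upwards [ha.coeFn_toLp] with x hx
    simp [hA, hx, RCLike.inner_apply, sq]
  have hBB : ∫ x, b x ^ 2 ∂μ = ‖B‖ ^ 2 := by
    rw [← real_inner_self_eq_norm_sq, L2.inner_def]
    refine integral_congr_ae ?_
    filter_upwards [hb.coeFn_toLp] with x hx
    simp [hB, hx, RCLike.inner_apply, sq]
  rw [← hinner, hAA, hBB, Real.sqrt_sq (norm_nonneg A), Real.sqrt_sq (norm_nonneg B)]
  exact abs_real_inner_le_norm A B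

/-- Product of two `L²` functions is integrable. -/
lemma my_mul_int {α : Type*} [MeasurableSpace α] {μ : Measure α} {a b : α → ℝ}
    (ha : MemLp a 2 μ) (hb : MemLp b 2 μ) :
    Integrable (fun x => a x * b x) μ := by
  have h := L2.integrable_inner (𝕜 := ℝ) (ha.toLp a) (hb.toLp b)
  refine h.congr ?_
  filter_upwards [ha.coeFn_toLp, hb.coeFn_toLp] with x hx hy
  simp [hx, hy, RCLike.inner_apply, mul_comm]

/-- Banach–Steinhaus: a weakly convergent sequence in `L²` is norm bounded. -/
lemma my_bs {α : Type*} [MeasurableSpace α] {μ : Measure α} {u : ℕ → α → ℝ}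
    (hu : ∀ n, MemLp (u n) 2 μ)
    (hconv : ∀ x : Lp ℝ 2 μ, ∃ L : ℝ,
      Tendsto (fun n => ∫ q, u n q * (x : α → ℝ) q ∂μ) atTop (nhds L)) :
    ∃ C : ℝ, ∀ n, Real.sqrt (∫ q, (u n q) ^ 2 ∂μ) ≤ C := by
  set g : ℕ → (Lp ℝ 2 μ) →L[ℝ] ℝ := fun n => innerSL ℝ ((hu n).toLp (u n)) with hg
  have hgx : ∀ n (x : Lp ℝ 2 μ), g n x = ∫ q, u n q * (x : α → ℝ) q ∂μ := by
    intro n x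
    show @inner ℝ _ _ ((hu n).toLp (u n)) x = _
    rw [L2.inner_def]
    refine integral_congr_ae ?_
    filter_upwards [(hu n).coeFn_toLp] with q hq
    simp [hq, RCLike.inner_apply, mul_comm]
  have hbdd : ∀ x : Lp ℝ 2 μ, ∃ C, ∀ n, ‖g n x‖ ≤ C := by
    intro x
    obtain ⟨L, hL⟩ := hconv x
    have : Tendsto (fun n => ‖g n x‖) atTop (nhds ‖L‖) := by
      simp_rw [hgx]
      exact hL.norm
    obtain ⟨C, hC⟩ := this.bddAbove_range
    exact ⟨C, fun n => hC (Set.mem_range_self n)⟩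
  obtain ⟨C, hC⟩ := banach_steinhaus hbdd
  refine ⟨C, fun n => ?_⟩
  have h1 : ∫ q, (u n q) ^ 2 ∂μ = ‖(hu n).toLp (u n)‖ ^ 2 := by
    rw [← real_inner_self_eq_norm_sq, L2.inner_def]
    refine integral_congr_ae ?_
    filter_upwards [(hu n).coeFn_toLp] with q hq
    simp [hq, RCLike.inner_apply, sq]
  rw [h1, Real.sqrt_sq (norm_nonneg _)]
  calc ‖(hu n).toLp (u n)‖ = ‖g n‖ := (innerSL_apply_norm ℝ _).symm
    _ ≤ C := hC n

/-- Expansion of the Minty integrand. -/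
lemma my_expand {α : Type*} [MeasurableSpace α] {μ : Measure α} (F U g : α → ℝ) (a v : ℝ)
    (h1 : Integrable (fun q => F q * (U q * g q)) μ)
    (h2 : Integrable (fun q => F q * g q) μ)
    (h3 : Integrable (fun q => U q * g q) μ)
    (h4 : Integrable g μ) :
    ∫ q, (F q - a) * (U q - v) * g q ∂μ =
      ∫ q, F q * (U q * g q) ∂μ - v * ∫ q, F q * g q ∂μ - a * ∫ q, U q * g q ∂μ
        + a * v * ∫ q, g q ∂μ := by
  have heq : (fun q => (F q - a) * (U q - v) * g q)
      = fun q => (F q * (U q * g q) - v * (F q * g q)) - (a * (U q * g q) - a * v * g q) := by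
    funext q; ring
  have e1 : Integrable (fun q => F q * (U q * g q) - v * (F q * g q)) μ :=
    h1.sub (h2.const_mul v)
  have e2 : Integrable (fun q => a * (U q * g q) - a * v * g q) μ :=
    (h3.const_mul a).sub (h4.const_mul (a * v))
  rw [heq, integral_sub e1 e2, integral_sub h1 (h2.const_mul v),
    integral_sub (h3.const_mul a) (h4.const_mul (a * v)),
    integral_const_mul, integral_const_mul, integral_const_mul]
  ring

/-- "Lemma A" of Hilhorst–van der Hout–Peletier: on `Q_T = (0,T) × Ω` with
`Ω ⊂ ℝ` compact, if `u_n ⇀ u` weakly in `L²(Q_T)`, each `f_n` is a nondecreasing continuous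
function on `ℝ`, `f_n → f` uniformly on compact subsets of `ℝ`, and `f_n ∘ u_n → χ` strongly
in `L²(Q_T)`, then `χ = f(u)` a.e. in `Q_T`. -/
theorem lemmaA_identify_nonlinear_weak_limit
    (Ω : Set ℝ) (hΩ : IsCompact Ω) (T : ℝ) (hT : 0 < T)
    (μ : Measure (ℝ × ℝ)) (hμ : μ = (volume : Measure (ℝ × ℝ)).restrict (Set.Ioo 0 T ×ˢ Ω))
    (u : ℕ → ℝ × ℝ → ℝ) (ulim χ : ℝ × ℝ → ℝ) (f : ℕ → ℝ → ℝ) (flim : ℝ → ℝ)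
    (humeas : ∀ n, Measurable (u n))
    (hubdd : ∀ n, ∃ M : ℝ, ∀ᵐ q ∂μ, |u n q| ≤ M)
    (hulim : MemLp ulim 2 μ) (hχ : MemLp χ 2 μ)
    (hweak : ∀ g : ℝ × ℝ → ℝ, MemLp g 2 μ →
      Tendsto (fun n : ℕ => ∫ q, u n q * g q ∂μ) atTop (nhds (∫ q, ulim q * g q ∂μ)))
    (hfcont : ∀ n, Continuous (f n))
    (hfmono : ∀ n, Monotone (f n))
    (hfunif : ∀ K : Set ℝ, IsCompact K → TendstoUniformlyOn f flim atTop K)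
    (hstrong : Tendsto (fun n : ℕ => ∫ q, (f n (u n q) - χ q) ^ 2 ∂μ) atTop (nhds 0)) :
    ∀ᵐ q ∂μ, χ q = flim (ulim q) := by
  -- finite measure
  haveI hfin : IsFiniteMeasure μ := by
    constructor
    rw [hμ, Measure.restrict_apply_univ]
    exact ((Metric.isBounded_Ioo 0 T).prod hΩ.isBounded).measure_lt_top
  -- u n ∈ L²
  have hu2 : ∀ n, MemLp (u n) 2 μ := by
    intro n
    obtain ⟨M, hM⟩ := hubdd n
    refine MemLp.of_bound (humeas n).aestronglyMeasurable M ?_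
    filter_upwards [hM] with q hq
    simpa [Real.norm_eq_abs] using hq
  -- f n ∘ u n ∈ L²
  have hF2 : ∀ n, MemLp (fun q => f n (u n q)) 2 μ := by
    intro n
    obtain ⟨M, hM⟩ := hubdd n
    obtain ⟨C, hC⟩ := (isCompact_Icc (a := -M) (b := M)).exists_bound_of_continuousOn
      (hfcont n).continuousOn
    refine MemLp.of_bound ((hfcont n).measurable.comp (humeas n)).aestronglyMeasurable C ?_
    filter_upwards [hM] with q hq
    exact hC (u n q) (abs_le.mp hq)
  -- uniform L² bound on u n
  obtain ⟨C, hC⟩ := my_bs hu2 (fun x => ⟨_, hweak x (Lp.memLp x)⟩)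
  -- f n v → flim v for every v
  have hfv : ∀ v : ℝ, Tendsto (fun n => f n v) atTop (nhds (flim v)) := by
    intro v
    have h := hfunif {v} isCompact_singleton
    rw [Metric.tendstoUniformlyOn_iff] at h
    rw [Metric.tendsto_atTop]
    intro ε hε
    obtain ⟨N, hN⟩ := (h ε hε).exists_forall_of_atTop
    exact ⟨N, fun n hn => by simpa [dist_comm] using hN n hn v rfl⟩
  -- flim is continuous
  have hflimc : Continuous flim := by
    have h : TendstoLocallyUniformly f flim atTop := by
      rw [tendstoLocallyUniformly_iff_forall_isCompact]
      exact hfunif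
    exact h.continuous (Eventually.of_forall hfcont).frequently
  -- KEY: Minty's trick
  have key : ∀ v : ℝ, ∀ᵐ q ∂μ, 0 ≤ (χ q - flim v) * (ulim q - v) := by
    intro v
    have hφint : Integrable (fun q => (χ q - flim v) * (ulim q - v)) μ :=
      my_mul_int (hχ.sub (memLp_const _)) (hulim.sub (memLp_const _))
    refine ae_nonneg_of_forall_setIntegral_nonneg hφint (fun s hs _ => ?_)
    set g : ℝ × ℝ → ℝ := s.indicator (fun _ => (1 : ℝ)) with hgdef
    have hg01 : ∀ q, 0 ≤ g q ∧ g q ≤ 1 := by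
      intro q
      by_cases hq : q ∈ s <;> simp [hgdef, hq]
    have hgmeas : Measurable g := measurable_one.indicator hs
    have hg2 : MemLp g 2 μ := by
      refine MemLp.of_bound hgmeas.aestronglyMeasurable 1 ?_
      exact Eventually.of_forall fun q => by
        rw [Real.norm_eq_abs, abs_of_nonneg (hg01 q).1]; exact (hg01 q).2
    -- membership lemmas
    have hug2 : ∀ n, MemLp (fun q => u n q * g q) 2 μ := by
      intro n
      refine MemLp.of_le (hu2 n) ((hu2 n).aestronglyMeasurable.mul hgmeas.aestronglyMeasurable) ?_
      refine Eventually.of_forall fun q => ?_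
      rw [Real.norm_eq_abs, Real.norm_eq_abs, abs_mul]
      calc |u n q| * |g q| ≤ |u n q| * 1 := by
            exact mul_le_mul_of_nonneg_left (by rw [abs_of_nonneg (hg01 q).1]; exact (hg01 q).2)
              (abs_nonneg _)
        _ = |u n q| := mul_one _
    have hχg2 : MemLp (fun q => χ q * g q) 2 μ := by
      refine MemLp.of_le hχ (hχ.aestronglyMeasurable.mul hgmeas.aestronglyMeasurable) ?_
      refine Eventually.of_forall fun q => ?_
      rw [Real.norm_eq_abs, Real.norm_eq_abs, abs_mul]
      calc |χ q| * |g q| ≤ |χ q| * 1 := mul_le_mul_of_nonneg_left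
            (by rw [abs_of_nonneg (hg01 q).1]; exact (hg01 q).2) (abs_nonneg _)
        _ = |χ q| := mul_one _
    have hulg2 : MemLp (fun q => ulim q * g q) 2 μ := by
      refine MemLp.of_le hulim (hulim.aestronglyMeasurable.mul hgmeas.aestronglyMeasurable) ?_
      refine Eventually.of_forall fun q => ?_
      rw [Real.norm_eq_abs, Real.norm_eq_abs, abs_mul]
      calc |ulim q| * |g q| ≤ |ulim q| * 1 := mul_le_mul_of_nonneg_left
            (by rw [abs_of_nonneg (hg01 q).1]; exact (hg01 q).2) (abs_nonneg _)
        _ = |ulim q| := mul_one _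
    have hh2 : ∀ n, MemLp (fun q => f n (u n q) - χ q) 2 μ := fun n => (hF2 n).sub hχ
    -- the approximating integrals are nonnegative
    have hInonneg : ∀ n, 0 ≤ ∫ q, (f n (u n q) - f n v) * (u n q - v) * g q ∂μ := by
      intro n
      refine integral_nonneg fun q => ?_
      refine mul_nonneg ?_ (hg01 q).1
      rcases le_total v (u n q) with h | h
      · exact mul_nonneg (sub_nonneg.2 (hfmono n h)) (sub_nonneg.2 h)
      · nlinarith [mul_nonneg (neg_nonneg.2 (sub_nonpos.2 (hfmono n h)))
          (neg_nonneg.2 (sub_nonpos.2 h))]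
    -- convergence of the four pieces
    -- T1 : ∫ hₙ (uₙ g) → 0
    have hT1 : Tendsto (fun n => ∫ q, (f n (u n q) - χ q) * (u n q * g q) ∂μ) atTop (nhds 0) := by
      have hb : ∀ n, |∫ q, (f n (u n q) - χ q) * (u n q * g q) ∂μ| ≤
          Real.sqrt (∫ q, (f n (u n q) - χ q) ^ 2 ∂μ) * C := by
        intro n
        refine (my_cs (hh2 n) (hug2 n)).trans ?_
        refine mul_le_mul_of_nonneg_left ?_ (Real.sqrt_nonneg _)
        refine le_trans ?_ (hC n)
        refine Real.sqrt_le_sqrt ?_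
        refine integral_mono (hug2 n).integrable_sq (hu2 n).integrable_sq fun q => ?_
        have h1 : (g q) ^ 2 ≤ 1 := by
          rw [sq]
          exact mul_le_one₀ (hg01 q).2 (hg01 q).1 (hg01 q).2
        calc (u n q * g q) ^ 2 = (u n q) ^ 2 * (g q) ^ 2 := by ring
          _ ≤ (u n q) ^ 2 * 1 := mul_le_mul_of_nonneg_left h1 (sq_nonneg _)
          _ = (u n q) ^ 2 := mul_one _
      have hlim : Tendsto (fun n => Real.sqrt (∫ q, (f n (u n q) - χ q) ^ 2 ∂μ) * C)
          atTop (nhds 0) := by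
        have := (hstrong.sqrt).mul_const C
        simpa using this
      exact squeeze_zero_norm (fun n => by rw [Real.norm_eq_abs]; exact hb n) hlim
    -- T2 : ∫ hₙ g → 0
    have hT2 : Tendsto (fun n => ∫ q, (f n (u n q) - χ q) * g q ∂μ) atTop (nhds 0) := by
      have hb : ∀ n, |∫ q, (f n (u n q) - χ q) * g q ∂μ| ≤
          Real.sqrt (∫ q, (f n (u n q) - χ q) ^ 2 ∂μ) * Real.sqrt (∫ q, g q ^ 2 ∂μ) :=
        fun n => my_cs (hh2 n) hg2
      have hlim : Tendsto (fun n => Real.sqrt (∫ q, (f n (u n q) - χ q) ^ 2 ∂μ)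
          * Real.sqrt (∫ q, g q ^ 2 ∂μ)) atTop (nhds 0) := by
        have := (hstrong.sqrt).mul_const (Real.sqrt (∫ q, g q ^ 2 ∂μ))
        simpa using this
      exact squeeze_zero_norm (fun n => by rw [Real.norm_eq_abs]; exact hb n) hlim
    -- S1 : ∫ Fₙ (uₙ g) → ∫ χ (ulim g)
    have hS1 : Tendsto (fun n => ∫ q, f n (u n q) * (u n q * g q) ∂μ) atTop
        (nhds (∫ q, χ q * (ulim q * g q) ∂μ)) := by
      have heq : ∀ n, ∫ q, f n (u n q) * (u n q * g q) ∂μ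
          = (∫ q, (f n (u n q) - χ q) * (u n q * g q) ∂μ) + ∫ q, u n q * (χ q * g q) ∂μ := by
        intro n
        rw [← integral_add (my_mul_int (hh2 n) (hug2 n)) (my_mul_int (hu2 n) hχg2)]
        refine integral_congr_ae (Eventually.of_forall fun q => ?_)
        ring
      have hw := hweak (fun q => χ q * g q) hχg2
      have hcomb := hT1.add hw
      rw [zero_add] at hcomb
      have hfinal : ∫ q, ulim q * (χ q * g q) ∂μ = ∫ q, χ q * (ulim q * g q) ∂μ :=
        integral_congr_ae (Eventually.of_forall fun q => by ring)
      rw [hfinal] at hcomb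
      simpa [← heq] using hcomb
    -- S2 : ∫ Fₙ g → ∫ χ g
    have hS2 : Tendsto (fun n => ∫ q, f n (u n q) * g q ∂μ) atTop
        (nhds (∫ q, χ q * g q ∂μ)) := by
      have heq : ∀ n, ∫ q, f n (u n q) * g q ∂μ
          = (∫ q, (f n (u n q) - χ q) * g q ∂μ) + ∫ q, χ q * g q ∂μ := by
        intro n
        rw [← integral_add (my_mul_int (hh2 n) hg2) (my_mul_int hχ hg2)]
        refine integral_congr_ae (Eventually.of_forall fun q => ?_)
        ring
      have hcomb := hT2.add (tendsto_const_nhds (x := ∫ q, χ q * g q ∂μ) (f := atTop))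
      rw [zero_add] at hcomb
      simpa [← heq] using hcomb
    -- S3 : ∫ uₙ g → ∫ ulim g
    have hS3 := hweak g hg2
    -- combine
    have hItend : Tendsto (fun n => ∫ q, (f n (u n q) - f n v) * (u n q - v) * g q ∂μ) atTop
        (nhds (∫ q, (χ q - flim v) * (ulim q - v) * g q ∂μ)) := by
      have hexp : ∀ n, ∫ q, (f n (u n q) - f n v) * (u n q - v) * g q ∂μ
          = ∫ q, f n (u n q) * (u n q * g q) ∂μ - v * ∫ q, f n (u n q) * g q ∂μ
            - f n v * ∫ q, u n q * g q ∂μ + f n v * v * ∫ q, g q ∂μ := fun n =>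
        my_expand _ _ _ _ _ (my_mul_int (hF2 n) (hug2 n)) (my_mul_int (hF2 n) hg2)
          (my_mul_int (hu2 n) hg2) (hg2.integrable one_le_two)
      have hexp' : ∫ q, (χ q - flim v) * (ulim q - v) * g q ∂μ
          = ∫ q, χ q * (ulim q * g q) ∂μ - v * ∫ q, χ q * g q ∂μ
            - flim v * ∫ q, ulim q * g q ∂μ + flim v * v * ∫ q, g q ∂μ :=
        my_expand _ _ _ _ _ (my_mul_int hχ hulg2) (my_mul_int hχ hg2)
          (my_mul_int hulim hg2) (hg2.integrable one_le_two)
      simp_rw [hexp, hexp']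
      exact (((hS1.sub (hS2.const_mul v)).sub ((hfv v).mul hS3)).add
        (((hfv v).mul_const v).mul_const _))
    have hge : 0 ≤ ∫ q, (χ q - flim v) * (ulim q - v) * g q ∂μ :=
      ge_of_tendsto' hItend hInonneg
    -- rewrite as a set integral
    have hind : ∫ q, (χ q - flim v) * (ulim q - v) * g q ∂μ
        = ∫ q in s, (χ q - flim v) * (ulim q - v) ∂μ := by
      rw [← integral_indicator hs]
      refine integral_congr_ae (Eventually.of_forall fun q => ?_)
      by_cases hq : q ∈ s <;> simp [hgdef, hq]
    rwa [hind] at hge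
  -- conclude pointwise
  have hae : ∀ᵐ q ∂μ, ∀ v : ℚ, 0 ≤ (χ q - flim v) * (ulim q - (v : ℝ)) :=
    (ae_all_iff).2 fun v => key v
  filter_upwards [hae] with q hq
  have hlower : flim (ulim q) ≤ χ q := by
    have hex : ∀ k : ℕ, ∃ v : ℚ, ulim q - 1 / (k + 1) < (v : ℝ) ∧ (v : ℝ) < ulim q := by
      intro k
      refine exists_rat_btwn ?_
      have : (0 : ℝ) < 1 / (k + 1) := by positivity
      linarith
    choose w hw1 hw2 using hex
    have hwt : Tendsto (fun k => ((w k : ℝ))) atTop (nhds (ulim q)) := by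
      refine tendsto_of_tendsto_of_tendsto_of_le_of_le (g := fun k : ℕ => ulim q - 1 / (k + 1))
        (h := fun _ : ℕ => ulim q) ?_ tendsto_const_nhds (fun k => (hw1 k).le) (fun k => (hw2 k).le)
      have := tendsto_const_nhds (x := ulim q) (f := atTop (α := ℕ))
      simpa using this.sub tendsto_one_div_add_atTop_nhds_zero_nat
    have hft : Tendsto (fun k => flim (w k)) atTop (nhds (flim (ulim q))) :=
      (hflimc.continuousAt.tendsto).comp hwt
    refine le_of_tendsto hft (Eventually.of_forall fun k => ?_)
    have h := hq (w k)
    by_contra hcon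
    push_neg at hcon
    have h2 : ulim q - (w k : ℝ) > 0 := by linarith [hw2 k]
    nlinarith
  have hupper : χ q ≤ flim (ulim q) := by
    have hex : ∀ k : ℕ, ∃ v : ℚ, ulim q < (v : ℝ) ∧ (v : ℝ) < ulim q + 1 / (k + 1) := by
      intro k
      refine exists_rat_btwn ?_
      have : (0 : ℝ) < 1 / (k + 1) := by positivity
      linarith
    choose w hw1 hw2 using hex
    have hwt : Tendsto (fun k => ((w k : ℝ))) atTop (nhds (ulim q)) := by
      refine tendsto_of_tendsto_of_tendsto_of_le_of_le (g := fun _ : ℕ => ulim q)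
        (h := fun k : ℕ => ulim q + 1 / (k + 1)) tendsto_const_nhds ?_
        (fun k => (hw1 k).le) (fun k => (hw2 k).le)
      have := tendsto_const_nhds (x := ulim q) (f := atTop (α := ℕ))
      simpa using this.add tendsto_one_div_add_atTop_nhds_zero_nat
    have hft : Tendsto (fun k => flim (w k)) atTop (nhds (flim (ulim q))) :=
      (hflimc.continuousAt.tendsto).comp hwt
    refine ge_of_tendsto hft (Eventually.of_forall fun k => ?_)
    have h := hq (w k)
    by_contra hcon
    push_neg at hcon
    have h2 : ulim q - (w k : ℝ) < 0 := by linarith [hw1 k]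
    nlinarith
  linarith
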